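/- Let M be a von Neumann algebra with a faithful normal tracial state τ and fix 1 ≤ p < ∞. For a in the set P of positive invertible elements of M, the geodesic symmetry σ_a : P → P, σ_a(b) = a b^{−1} a, is a bijection of P onto itself which is an isometry for the geodesic distance d_p: for every piecewise smooth curve γ in P, the curve σ_a ∘ γ satisfies ‖(d/dt)(σ_a∘γ)(t)‖_{σ_a(γ(t)),p} = ‖γ'(t)‖_{γ(t),p} for all t, and consequently d_p(σ_a(b), σ_a(c)) = d_p(b,c) for all b, c ∈ P. -/

import Mathlib

open scoped ComplexOrder

section Prelude
variable {M : Type*} [CStarAlgebra M]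

/-- The absolute value `|z| = (z*z)^{1/2}` of an element of a C*-algebra. -/
noncomputable def oabs (z : M) : M := cfc Real.sqrt (star z * z)

/-- Real powers `a ^ t` of a (positive invertible) element, via continuous functional calculus. -/
noncomputable def opow (a : M) (t : ℝ) : M := cfc (fun x : ℝ => x ^ t) a

/-- The logarithm of a (positive invertible) element, via continuous functional calculus. -/
noncomputable def olog (a : M) : M := cfc Real.log a

/-- The exponential given by the usual power series. -/
noncomputable def oexp (x : M) : M := (NormedSpace.expSeries ℂ M).sum x

/-- Positive invertible elements: self-adjoint, invertible, with spectrum in `(0, ∞)`. -/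
def IsPosInv (a : M) : Prop :=
  IsSelfAdjoint a ∧ IsUnit a ∧ spectrum ℝ a ⊆ Set.Ioi (0 : ℝ)

/-- A faithful (normal) tracial state on a von Neumann algebra `M`
(normality, i.e. ultraweak continuity, is not encoded; norm continuity is). -/
structure FiniteTrace (M : Type*) [CStarAlgebra M] where
  toFun : M →ₗ[ℂ] ℂ
  map_one' : toFun 1 = 1
  nonneg' : ∀ x : M, 0 ≤ (toFun (star x * x)).re
  real' : ∀ x : M, (toFun (star x * x)).im = 0
  faithful' : ∀ x : M, toFun (star x * x) = 0 → x = 0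
  tracial' : ∀ x y : M, toFun (x * y) = toFun (y * x)
  continuous' : Continuous toFun

/-- The `p`-norm `‖z‖_p = τ(|z|^p)^{1/p}`. -/
noncomputable def FiniteTrace.pnorm (τ : FiniteTrace M) (p : ℝ) (z : M) : ℝ :=
  (τ.toFun (opow (oabs z) p)).re ^ p⁻¹

/-- Piecewise smooth on `[0,1]`: continuous there, differentiable off a finite set. -/
def PSmooth (γ : ℝ → M) : Prop :=
  ContinuousOn γ (Set.Icc 0 1) ∧
  ∃ s : Finset ℝ, ∀ t ∈ Set.Ioo (0 : ℝ) 1, t ∉ s → DifferentiableAt ℝ γ t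

/-- The Finsler `p`-speed `‖γ(t)^{-1/2} γ'(t) γ(t)^{-1/2}‖_p` of a curve in the positive cone. -/
noncomputable def speed (τ : FiniteTrace M) (p : ℝ) (γ : ℝ → M) (t : ℝ) : ℝ :=
  τ.pnorm p (opow (γ t) (-(1/2 : ℝ)) * deriv γ t * opow (γ t) (-(1/2 : ℝ)))

/-- The Finsler `p`-length of a curve in the positive cone. -/
noncomputable def pLen (τ : FiniteTrace M) (p : ℝ) (γ : ℝ → M) : ℝ :=
  ∫ t in (0:ℝ)..1, speed τ p γ t

/-- The geodesic distance: infimum of `p`-lengths of piecewise smooth curves in the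
positive cone joining `a` to `b`. -/
noncomputable def dp (τ : FiniteTrace M) (p : ℝ) (a b : M) : ℝ :=
  sInf (pLen τ p '' {γ : ℝ → M | PSmooth γ ∧ (∀ t ∈ Set.Icc (0:ℝ) 1, IsPosInv (γ t)) ∧
    γ 0 = a ∧ γ 1 = b})

/-- The geodesic `γ_{a,b}(t) = a^{1/2} (a^{-1/2} b a^{-1/2})^t a^{1/2}`. -/
noncomputable def geo (a b : M) (t : ℝ) : M :=
  opow a (1/2) * opow (opow a (-(1/2 : ℝ)) * b * opow a (-(1/2 : ℝ))) t * opow a (1/2)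

end Prelude

section Aux
variable {M : Type*} [CStarAlgebra M]

lemma FiniteTrace.nontrivial (τ : FiniteTrace M) : Nontrivial M := by
  by_contra h
  rw [not_nontrivial_iff_subsingleton] at h
  have h10 : (1 : M) = 0 := Subsingleton.elim _ _
  have h2 := τ.map_one'
  rw [h10, map_zero] at h2
  exact one_ne_zero h2.symm

lemma star_mul_conj (u z : M) (h2 : star u * u = 1) :
    star (u * z * star u) * (u * z * star u) = u * (star z * z) * star u := by
  have h3 : ∀ w : M, star u * (u * w) = w := fun w => by rw [← mul_assoc, h2, one_mul]
  simp only [star_mul, star_star, mul_assoc, h3]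

lemma pnorm_neg (τ : FiniteTrace M) (p : ℝ) (z : M) : τ.pnorm p (-z) = τ.pnorm p z := by
  unfold FiniteTrace.pnorm oabs
  rw [show star (-z) * (-z) = star z * z by simp]

lemma pnorm_zero (τ : FiniteTrace M) {p : ℝ} (hp : 1 ≤ p) : τ.pnorm p 0 = 0 := by
  have := τ.nontrivial
  have hp0 : p ≠ 0 := by positivity
  have h0 : oabs (0 : M) = 0 := by
    unfold oabs
    rw [show star (0:M) * 0 = 0 by simp]
    calc cfc Real.sqrt (0:M) = cfc (fun _ : ℝ => (0:ℝ)) (0:M) := by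
          apply cfc_congr
          intro x hx
          rw [CFC.spectrum_zero_eq] at hx
          simp_all [Real.sqrt_eq_zero']
      _ = 0 := by rw [cfc_const 0 0 (cfc_predicate_zero ℝ), map_zero]
  unfold FiniteTrace.pnorm
  rw [h0]
  have h1 : opow (0 : M) p = 0 := by
    unfold opow
    calc cfc (fun x : ℝ => x ^ p) (0:M) = cfc (fun _ : ℝ => (0:ℝ)) (0:M) := by
          apply cfc_congr
          intro x hx
          rw [CFC.spectrum_zero_eq] at hx
          simp_all [Real.zero_rpow hp0]
      _ = 0 := by rw [cfc_const 0 0 (cfc_predicate_zero ℝ), map_zero]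
  rw [h1, map_zero]
  simp [Real.zero_rpow (inv_ne_zero hp0)]

/-- Conjugation by an invertible isometry-like element `u` with `u u* = u* u = 1`. -/
noncomputable def conjHom (u : M) (h1 : u * star u = 1) (h2 : star u * u = 1) : M →⋆ₐ[ℂ] M where
  toFun x := u * x * star u
  map_one' := by simpa using h1
  map_mul' x y := by
    have h3 : ∀ z : M, star u * (u * z) = z := fun z => by rw [← mul_assoc, h2, one_mul]
    simp only [mul_assoc, h3]
  map_zero' := by simp
  map_add' x y := by simp [mul_add, add_mul]
  commutes' c := by
    simp only [Algebra.algebraMap_eq_smul_one, mul_smul_comm, smul_mul_assoc, mul_one, h1]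
  map_star' x := by simp [star_mul, mul_assoc]

lemma conjHom_cont (u : M) (h1 : u * star u = 1) (h2 : star u * u = 1) :
    Continuous (conjHom u h1 h2) := by
  show Continuous fun x : M => u * x * star u
  fun_prop

lemma cfc_conj (u y : M) (h1 : u * star u = 1) (h2 : star u * u = 1)
    (f : ℝ → ℝ) (hy : IsSelfAdjoint y) (hf : ContinuousOn f (spectrum ℝ y)) :
    cfc f (u * y * star u) = u * cfc f y * star u := by
  have hsa : IsSelfAdjoint (u * y * star u) := by
    rw [IsSelfAdjoint, star_mul, star_mul, star_star, hy.star_eq, mul_assoc]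
  have := StarAlgHom.map_cfc (conjHom u h1 h2) f y hf (conjHom_cont u h1 h2) hy hsa
  exact this.symm

lemma pnorm_conj (τ : FiniteTrace M) {p : ℝ} (hp : 0 ≤ p) (u z : M)
    (h1 : u * star u = 1) (h2 : star u * u = 1) :
    τ.pnorm p (u * z * star u) = τ.pnorm p z := by
  have hzz : IsSelfAdjoint (star z * z) := IsSelfAdjoint.star_mul_self z
  have habs : oabs (u * z * star u) = u * oabs z * star u := by
    unfold oabs
    rw [star_mul_conj u z h2]
    exact cfc_conj u (star z * z) h1 h2 Real.sqrt hzz Real.continuous_sqrt.continuousOn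
  have hopow : opow (oabs (u * z * star u)) p = u * opow (oabs z) p * star u := by
    rw [habs, opow, opow]
    exact cfc_conj u (oabs z) h1 h2 _ (cfc_predicate _ _)
      (Real.continuous_rpow_const hp).continuousOn
  unfold FiniteTrace.pnorm
  rw [hopow]
  have htr : τ.toFun (u * opow (oabs z) p * star u) = τ.toFun (opow (oabs z) p) := by
    rw [τ.tracial' (u * opow (oabs z) p) (star u), ← mul_assoc, h2, one_mul]
  rw [htr]

lemma IsPosInv.contOn {c : M} (hc : IsPosInv c) {t : ℝ} :
    ContinuousOn (fun x : ℝ => x ^ t) (spectrum ℝ c) := fun x hx =>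
  (Real.continuousAt_rpow_const x t (Or.inl (ne_of_gt (hc.2.2 hx)))).continuousWithinAt

lemma opow_sa (c : M) (t : ℝ) : IsSelfAdjoint (opow c t) := cfc_predicate _ _

lemma IsPosInv.opow_mul_opow {c : M} (hc : IsPosInv c) (s t : ℝ) :
    opow c s * opow c t = opow c (s + t) := by
  rw [opow, opow, ← cfc_mul _ _ c hc.contOn hc.contOn]
  exact cfc_congr fun x hx => (Real.rpow_add (hc.2.2 hx) s t).symm

lemma IsPosInv.opow_one {c : M} (hc : IsPosInv c) : opow c 1 = c := by
  rw [opow]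
  calc cfc (fun x : ℝ => x ^ (1:ℝ)) c = cfc (id : ℝ → ℝ) c :=
        cfc_congr fun x _ => Real.rpow_one x
    _ = c := cfc_id ℝ c hc.1

lemma IsPosInv.opow_zero {c : M} (hc : IsPosInv c) : opow c 0 = 1 := by
  rw [opow]
  calc cfc (fun x : ℝ => x ^ (0:ℝ)) c = cfc (fun _ : ℝ => (1:ℝ)) c :=
        cfc_congr fun x _ => Real.rpow_zero x
    _ = 1 := by rw [cfc_const 1 c hc.1, map_one]

lemma IsPosInv.opow_neg_one {c : M} (hc : IsPosInv c) : opow c (-1) = Ring.inverse c := by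
  have h1 : opow c (-1) * c = 1 := by
    nth_rewrite 2 [← hc.opow_one]
    rw [hc.opow_mul_opow]; norm_num; exact hc.opow_zero
  have h2 : c * opow c (-1) = 1 := by
    nth_rewrite 1 [← hc.opow_one]
    rw [hc.opow_mul_opow]; norm_num; exact hc.opow_zero
  let U : Mˣ := ⟨c, opow c (-1), h2, h1⟩
  exact (Ring.inverse_unit U).symm

lemma IsPosInv.opow_neg_half_sq {c : M} (hc : IsPosInv c) :
    opow c (-(1/2 : ℝ)) * opow c (-(1/2 : ℝ)) = Ring.inverse c := by
  rw [hc.opow_mul_opow, ← hc.opow_neg_one]; norm_num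

lemma IsPosInv.opow_conj {c : M} (hc : IsPosInv c) :
    opow c (-(1/2 : ℝ)) * c * opow c (-(1/2 : ℝ)) = 1 := by
  nth_rewrite 2 [← hc.opow_one]
  rw [hc.opow_mul_opow, hc.opow_mul_opow]; norm_num; exact hc.opow_zero

lemma sigma_inverse {a b : M} (ha : IsUnit a) (hb : IsUnit b) :
    Ring.inverse (a * Ring.inverse b * a) = Ring.inverse a * b * Ring.inverse a := by
  obtain ⟨Ua, rfl⟩ := ha
  obtain ⟨Ub, rfl⟩ := hb
  rw [Ring.inverse_unit, ← Units.val_mul, ← Units.val_mul, Ring.inverse_unit,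
    Ring.inverse_unit, mul_inv_rev, mul_inv_rev, inv_inv, ← Units.val_mul, ← Units.val_mul,
    mul_assoc]

lemma sigma_sigma {a b : M} (ha : IsUnit a) (hb : IsUnit b) :
    a * Ring.inverse (a * Ring.inverse b * a) * a = b := by
  rw [sigma_inverse ha hb]
  rw [show a * (Ring.inverse a * b * Ring.inverse a) * a
      = (a * Ring.inverse a) * b * (Ring.inverse a * a) by simp only [mul_assoc]]
  rw [Ring.mul_inverse_cancel a ha, Ring.inverse_mul_cancel a ha, one_mul, mul_one]

lemma IsPosInv.sigma {a b : M} (ha : IsPosInv a) (hb : IsPosInv b) :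
    IsPosInv (a * Ring.inverse b * a) := by
  have hsa : IsSelfAdjoint (a * Ring.inverse b * a) := by
    rw [IsSelfAdjoint, star_mul, star_mul, ha.1.star_eq, ← Ring.inverse_star, hb.1.star_eq,
      mul_assoc]
  have hu : IsUnit (a * Ring.inverse b * a) := (ha.2.1.mul hb.2.1.ringInverse).mul ha.2.1
  refine ⟨hsa, hu, ?_⟩
  have key : a * Ring.inverse b * a = star (opow b (-(1/2:ℝ)) * a) * (opow b (-(1/2:ℝ)) * a) := by
    rw [star_mul, ha.1.star_eq, (opow_sa b _).star_eq]
    rw [show a * opow b (-(1/2:ℝ)) * (opow b (-(1/2:ℝ)) * a)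
        = a * (opow b (-(1/2:ℝ)) * opow b (-(1/2:ℝ))) * a by simp only [mul_assoc]]
    rw [hb.opow_neg_half_sq]
  intro x hx
  rw [key] at hx
  exact lt_of_le_of_ne (spectrum_star_mul_self_nonneg x hx)
    (by rintro rfl; exact (spectrum.zero_notMem_iff ℝ).mpr (key ▸ hu) hx)

section Key
variable {a b : M} (ha : IsPosInv a) (hb : IsPosInv b)

lemma star_u (ha : IsPosInv a) (hb : IsPosInv b) :
    star (opow (a * Ring.inverse b * a) (-(1/2:ℝ)) * a * opow b (-(1/2:ℝ)))
      = opow b (-(1/2:ℝ)) * a * opow (a * Ring.inverse b * a) (-(1/2:ℝ)) := by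
  rw [star_mul, star_mul, (opow_sa _ _).star_eq, (opow_sa _ _).star_eq, ha.1.star_eq]
  simp only [mul_assoc]

lemma u_mul_star_u (τ : FiniteTrace M) (ha : IsPosInv a) (hb : IsPosInv b) :
    (opow (a * Ring.inverse b * a) (-(1/2:ℝ)) * a * opow b (-(1/2:ℝ))) *
      star (opow (a * Ring.inverse b * a) (-(1/2:ℝ)) * a * opow b (-(1/2:ℝ))) = 1 := by
  rw [star_u ha hb]
  set mc := opow (a * Ring.inverse b * a) (-(1/2:ℝ))
  set mb := opow b (-(1/2:ℝ))
  have h1 : mc * a * mb * (mb * a * mc) = mc * (a * (mb * mb) * a) * mc := by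
    simp only [mul_assoc]
  rw [h1, hb.opow_neg_half_sq, show mc * (a * Ring.inverse b * a) * mc = 1 from
    (ha.sigma hb).opow_conj]

lemma star_u_mul_u (ha : IsPosInv a) (hb : IsPosInv b) :
    star (opow (a * Ring.inverse b * a) (-(1/2:ℝ)) * a * opow b (-(1/2:ℝ))) *
      (opow (a * Ring.inverse b * a) (-(1/2:ℝ)) * a * opow b (-(1/2:ℝ))) = 1 := by
  rw [star_u ha hb]
  set mc := opow (a * Ring.inverse b * a) (-(1/2:ℝ))
  set mb := opow b (-(1/2:ℝ))
  have h1 : mb * a * mc * (mc * a * mb) = mb * (a * (mc * mc) * a) * mb := by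
    simp only [mul_assoc]
  rw [h1, (ha.sigma hb).opow_neg_half_sq, sigma_inverse ha.2.1 hb.2.1,
    show a * (Ring.inverse a * b * Ring.inverse a) * a
      = (a * Ring.inverse a) * b * (Ring.inverse a * a) from by simp only [mul_assoc],
    Ring.mul_inverse_cancel a ha.2.1, Ring.inverse_mul_cancel a ha.2.1, one_mul, mul_one]
  exact hb.opow_conj

lemma pnorm_key (τ : FiniteTrace M) {p : ℝ} (hp : 0 ≤ p) (ha : IsPosInv a) (hb : IsPosInv b)
    (x : M) :
    τ.pnorm p (opow (a * Ring.inverse b * a) (-(1/2:ℝ)) *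
        (a * Ring.inverse b * x * Ring.inverse b * a) *
        opow (a * Ring.inverse b * a) (-(1/2:ℝ)))
      = τ.pnorm p (opow b (-(1/2:ℝ)) * x * opow b (-(1/2:ℝ))) := by
  have hmm : ∀ y : M, opow b (-(1/2:ℝ)) * (opow b (-(1/2:ℝ)) * y) = Ring.inverse b * y :=
    fun y => by rw [← mul_assoc, hb.opow_neg_half_sq]
  have hkey : opow (a * Ring.inverse b * a) (-(1/2:ℝ)) *
        (a * Ring.inverse b * x * Ring.inverse b * a) *
        opow (a * Ring.inverse b * a) (-(1/2:ℝ))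
      = (opow (a * Ring.inverse b * a) (-(1/2:ℝ)) * a * opow b (-(1/2:ℝ))) *
        (opow b (-(1/2:ℝ)) * x * opow b (-(1/2:ℝ))) *
        star (opow (a * Ring.inverse b * a) (-(1/2:ℝ)) * a * opow b (-(1/2:ℝ))) := by
    rw [star_u ha hb]
    simp only [mul_assoc, hmm]
  rw [hkey, pnorm_conj τ hp _ _ (u_mul_star_u τ ha hb) (star_u_mul_u ha hb)]

end Key

section Calc0
variable {a : M} {γ : ℝ → M} {t : ℝ}

lemma hasDerivAt_sigma (hb : IsUnit (γ t)) (hγ : DifferentiableAt ℝ γ t) :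
    HasDerivAt (fun s => a * Ring.inverse (γ s) * a)
      (-(a * Ring.inverse (γ t) * deriv γ t * Ring.inverse (γ t) * a)) t := by
  have h1 : HasDerivAt γ (deriv γ t) t := hγ.hasDerivAt
  have hinv : HasDerivAt (fun s => Ring.inverse (γ s))
      (-(Ring.inverse (γ t) * deriv γ t * Ring.inverse (γ t))) t := by
    obtain ⟨U, hU⟩ := hb
    have hru : HasFDerivAt Ring.inverse
        (-(ContinuousLinearMap.mulLeftRight ℝ M ↑U⁻¹ ↑U⁻¹)) (γ t) :=
      hU ▸ hasFDerivAt_ringInverse (𝕜 := ℝ) (R := M) U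
    have h2 := hru.comp_hasDerivAt t h1
    have hinvU : Ring.inverse (γ t) = ↑U⁻¹ := by rw [← hU, Ring.inverse_unit]
    simpa [ContinuousLinearMap.mulLeftRight_apply, hinvU, mul_assoc, Function.comp_def] using h2
  have h3 := (hinv.const_mul a).mul_const a
  convert h3 using 1
  simp only [neg_mul, mul_neg, mul_assoc]

lemma differentiableAt_sigma (hb : IsUnit (γ t)) (hγ : DifferentiableAt ℝ γ t) :
    DifferentiableAt ℝ (fun s => a * Ring.inverse (γ s) * a) t :=
  (hasDerivAt_sigma hb hγ).differentiableAt

lemma diff_of_diff_sigma [Nontrivial M] (ha : IsUnit a) (hb : IsUnit (γ t))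
    (hδ : DifferentiableAt ℝ (fun s => a * Ring.inverse (γ s) * a) t) :
    DifferentiableAt ℝ γ t := by
  set δ := fun s => a * Ring.inverse (γ s) * a with hδdef
  have hδt : IsUnit (δ t) := (ha.mul hb.ringInverse).mul ha
  have hev : ∀ᶠ s in nhds t, IsUnit (δ s) := by
    have hc : ContinuousAt δ t := hδ.continuousAt
    exact hc.eventually_mem (Units.isOpen.mem_nhds hδt)
  have hevγ : ∀ᶠ s in nhds t, IsUnit (γ s) := by
    filter_upwards [hev] with s hs
    by_contra h
    rw [hδdef] at hs
    simp only [Ring.inverse_non_unit _ h, mul_zero, zero_mul] at hs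
    exact not_isUnit_zero hs
  have heq : γ =ᶠ[nhds t] fun s => a * Ring.inverse (δ s) * a := by
    filter_upwards [hevγ] with s hs
    rw [hδdef]
    exact (sigma_sigma ha hs).symm
  rw [Filter.EventuallyEq.differentiableAt_iff heq]
  exact differentiableAt_sigma hδt hδ

end Calc0

lemma speed_sigma (τ : FiniteTrace M) {p : ℝ} (hp : 1 ≤ p) {a : M} (ha : IsPosInv a)
    {γ : ℝ → M} {t : ℝ} (hb : IsPosInv (γ t)) :
    speed τ p (fun s => a * Ring.inverse (γ s) * a) t = speed τ p γ t := by
  have := τ.nontrivial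
  unfold speed
  simp only []
  by_cases hdiff : DifferentiableAt ℝ γ t
  · have hd := (hasDerivAt_sigma (a := a) hb.2.1 hdiff).deriv
    rw [hd, mul_neg, neg_mul, pnorm_neg]
    exact pnorm_key τ (le_trans zero_le_one hp) ha hb (deriv γ t)
  · have hγ0 : deriv γ t = 0 := deriv_zero_of_not_differentiableAt hdiff
    have hδ0 : deriv (fun s => a * Ring.inverse (γ s) * a) t = 0 :=
      deriv_zero_of_not_differentiableAt
        (fun h => hdiff (diff_of_diff_sigma ha.2.1 hb.2.1 h))
    rw [hγ0, hδ0]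
    simp only [mul_zero, zero_mul]

lemma psmooth_sigma {a : M} (ha : IsPosInv a) {γ : ℝ → M} (hγ : PSmooth γ)
    (hpos : ∀ t ∈ Set.Icc (0:ℝ) 1, IsPosInv (γ t)) :
    PSmooth (fun s => a * Ring.inverse (γ s) * a) := by
  obtain ⟨hc, s, hs⟩ := hγ
  constructor
  · intro t ht
    have h1 : ContinuousWithinAt γ (Set.Icc 0 1) t := hc t ht
    have h2 : ContinuousAt Ring.inverse (γ t) := by
      obtain ⟨U, hU⟩ := (hpos t ht).2.1
      exact hU ▸ NormedRing.inverse_continuousAt U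
    exact (continuousWithinAt_const.mul (h2.comp_continuousWithinAt h1)).mul
      continuousWithinAt_const
  · exact ⟨s, fun t ht hts =>
      differentiableAt_sigma (hpos t (Set.mem_Icc_of_Ioo ht)).2.1 (hs t ht hts)⟩

lemma pLen_sigma (τ : FiniteTrace M) {p : ℝ} (hp : 1 ≤ p) {a : M} (ha : IsPosInv a)
    {γ : ℝ → M} (hpos : ∀ t ∈ Set.Icc (0:ℝ) 1, IsPosInv (γ t)) :
    pLen τ p (fun s => a * Ring.inverse (γ s) * a) = pLen τ p γ :=
  intervalIntegral.integral_congr fun t ht =>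
    speed_sigma τ hp ha (hpos t (by rwa [Set.uIcc_of_le zero_le_one] at ht))

lemma dp_sigma (τ : FiniteTrace M) {p : ℝ} (hp : 1 ≤ p) {a : M} (ha : IsPosInv a)
    {b c : M} (hb : IsPosInv b) (hc : IsPosInv c) :
    dp τ p (a * Ring.inverse b * a) (a * Ring.inverse c * a) = dp τ p b c := by
  unfold dp
  congr 1
  ext r
  simp only [Set.mem_image, Set.mem_setOf_eq]
  constructor
  · rintro ⟨γ, ⟨hγ1, hγ2, hγ3, hγ4⟩, rfl⟩
    refine ⟨fun s => a * Ring.inverse (γ s) * a,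
      ⟨psmooth_sigma ha hγ1 hγ2, fun t ht => ha.sigma (hγ2 t ht), ?_, ?_⟩,
      pLen_sigma τ hp ha hγ2⟩
    · show a * Ring.inverse (γ 0) * a = b
      rw [hγ3]; exact sigma_sigma ha.2.1 hb.2.1
    · show a * Ring.inverse (γ 1) * a = c
      rw [hγ4]; exact sigma_sigma ha.2.1 hc.2.1
  · rintro ⟨γ, ⟨hγ1, hγ2, hγ3, hγ4⟩, rfl⟩
    refine ⟨fun s => a * Ring.inverse (γ s) * a,
      ⟨psmooth_sigma ha hγ1 hγ2, fun t ht => ha.sigma (hγ2 t ht), ?_, ?_⟩,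
      pLen_sigma τ hp ha hγ2⟩
    · show a * Ring.inverse (γ 0) * a = a * Ring.inverse b * a
      rw [hγ3]
    · show a * Ring.inverse (γ 1) * a = a * Ring.inverse c * a
      rw [hγ4]

theorem geodesic_symmetry_isometry'
    (τ : FiniteTrace M) (p : ℝ) (hp : 1 ≤ p)
    (a : M) (ha : IsPosInv a) :
    Set.BijOn (fun b : M => a * Ring.inverse b * a) {b : M | IsPosInv b} {b : M | IsPosInv b} ∧
    (∀ γ : ℝ → M, PSmooth γ → (∀ t ∈ Set.Icc (0:ℝ) 1, IsPosInv (γ t)) →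
      ∀ t ∈ Set.Icc (0:ℝ) 1,
        speed τ p (fun s => a * Ring.inverse (γ s) * a) t = speed τ p γ t) ∧
    (∀ b c : M, IsPosInv b → IsPosInv c →
      dp τ p (a * Ring.inverse b * a) (a * Ring.inverse c * a) = dp τ p b c) := by
  refine ⟨?_, ?_, ?_⟩
  · have hmaps : Set.MapsTo (fun b : M => a * Ring.inverse b * a)
        {b : M | IsPosInv b} {b : M | IsPosInv b} := fun b hb => ha.sigma hb
    have hinv : Set.InvOn (fun b : M => a * Ring.inverse b * a)
        (fun b : M => a * Ring.inverse b * a) {b : M | IsPosInv b} {b : M | IsPosInv b} :=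
      ⟨fun b hb => sigma_sigma ha.2.1 hb.2.1, fun b hb => sigma_sigma ha.2.1 hb.2.1⟩
    exact hinv.bijOn hmaps hmaps
  · exact fun γ _ hpos t ht => speed_sigma τ hp ha (hpos t ht)
  · exact fun b c hb hc => dp_sigma τ hp ha hb hc

end Aux

/-- the geodesic symmetry `σ_a(b) = a b⁻¹ a` is a bijection of the positive
invertible elements preserving speeds of piecewise smooth curves, hence an isometry of `d_p`. -/
theorem geodesic_symmetry_isometry
    {M : Type*} [CStarAlgebra M] (τ : FiniteTrace M) (p : ℝ) (hp : 1 ≤ p)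
    (a : M) (ha : IsPosInv a) :
    Set.BijOn (fun b : M => a * Ring.inverse b * a) {b : M | IsPosInv b} {b : M | IsPosInv b} ∧
    (∀ γ : ℝ → M, PSmooth γ → (∀ t ∈ Set.Icc (0:ℝ) 1, IsPosInv (γ t)) →
      ∀ t ∈ Set.Icc (0:ℝ) 1,
        speed τ p (fun s => a * Ring.inverse (γ s) * a) t = speed τ p γ t) ∧
    (∀ b c : M, IsPosInv b → IsPosInv c →
      dp τ p (a * Ring.inverse b * a) (a * Ring.inverse c * a) = dp τ p b c) :=
  geodesic_symmetry_isometry' τ p hp a ha
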